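/- For every fixed integer r ≥ 2 and every ε > 0 there is an integer n₀ such that for all n ≥ n₀, D(n,r) ≤ (1+ε)·C(n, r−1)/r. Together with the lower bound D(n,r) ≥ C(n,r−1)/r, this gives D(n,r) = (1+o(1))·C(n,r−1)/r as n → ∞. -/

import Mathlib

open Finset

/-- `u` covers the set `A` in the `r`-uniform hypergraph `H`: `u ∉ A` and every set
`B ∪ {u}` with `B` an `(r-1)`-subset of `A` is an edge of `H`. -/
def Covers {n : ℕ} (r : ℕ) (H : Finset (Finset (Fin n))) (u : Fin n) (A : Finset (Fin n)) : Prop :=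
  u ∉ A ∧ ∀ B ⊆ A, B.card = r - 1 → insert u B ∈ H

/-- `A` is covered in `H` if some vertex covers it. -/
def CoveredIn {n : ℕ} (r : ℕ) (H : Finset (Finset (Fin n))) (A : Finset (Fin n)) : Prop :=
  ∃ u, Covers r H u A

/-- `H` is an `r`-uniform hypergraph. -/
def IsUniform {n : ℕ} (r : ℕ) (H : Finset (Finset (Fin n))) : Prop :=
  ∀ e ∈ H, e.card = r

/-- `H` is an `r`-uniform hypergraph on `[n]` in which every `k`-set of vertices is covered. -/
def CoversAllK (n k r : ℕ) (H : Finset (Finset (Fin n))) : Prop :=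
  IsUniform r H ∧ ∀ A : Finset (Fin n), A.card = k → CoveredIn r H A

/-- `f n k r`: the minimum number of edges in an `r`-uniform hypergraph on `[n]`
in which every `k`-set of vertices is covered. -/
noncomputable def f (n k r : ℕ) : ℕ :=
  sInf {m | ∃ H : Finset (Finset (Fin n)), CoversAllK n k r H ∧ H.card = m}

/-- `H` is an `r`-uniform hypergraph on `[n]` such that every `(r-1)`-set of vertices
is contained in some edge. -/
def CoversShadows (n r : ℕ) (H : Finset (Finset (Fin n))) : Prop :=
  IsUniform r H ∧ ∀ B : Finset (Fin n), B.card = r - 1 → ∃ e ∈ H, B ⊆ e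

/-- `D n r`: minimum number of edges of an `r`-uniform hypergraph on `[n]` covering
all `(r-1)`-sets. -/
noncomputable def D (n r : ℕ) : ℕ :=
  sInf {m | ∃ H : Finset (Finset (Fin n)), CoversShadows n r H ∧ H.card = m}

/-- `g n k r = C(n,r) - C(n-k+r-1,r) + D(n-k+r-1,r)`. -/
noncomputable def g (n k r : ℕ) : ℕ :=
  n.choose r - (n - k + r - 1).choose r + D (n - k + r - 1) r

/-- Membership in the extremal family `𝒢(n,k,r)`: all `r`-sets meeting the first
`k-r+1` vertices, together with `D(n-k+r-1,r)` `r`-sets on the remaining vertices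
whose shadow contains every `(r-1)`-set of the remaining vertices. -/
def InG (n k r : ℕ) (H : Finset (Finset (Fin n))) : Prop :=
  ∃ S : Finset (Finset (Fin n)),
    S.card = D (n - k + r - 1) r ∧
    (∀ e ∈ S, e.card = r ∧ ∀ v ∈ e, k - r + 1 ≤ (v : ℕ)) ∧
    (∀ B : Finset (Fin n), B.card = r - 1 → (∀ v ∈ B, k - r + 1 ≤ (v : ℕ)) →
      ∃ e ∈ S, B ⊆ e) ∧
    H = (Finset.univ.filter
          fun e : Finset (Fin n) => e.card = r ∧ ∃ v ∈ e, (v : ℕ) < k - r + 1) ∪ S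

/-- The degree of a vertex in a hypergraph. -/
def degreeH {n : ℕ} (H : Finset (Finset (Fin n))) (v : Fin n) : ℕ :=
  (H.filter fun e => v ∈ e).card


open Finset

namespace DUpperAux

variable {n : ℕ}

/-- Key structural lemma: an `r`-set with zero sum is determined by any of its
`(r-1)`-subsets. -/
lemma eq_insert_neg_sum [NeZero n] {r : ℕ} {e B : Finset (Fin n)}
    (hecard : e.card = r) (hesum : ∑ v ∈ e, v = 0)
    (hBe : B ⊆ e) (hB : B.card = r - 1) (hr : 1 ≤ r) :
    e = insert (-(∑ v ∈ B, v)) B := by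
  obtain ⟨u, hu, heq⟩ := Finset.exists_eq_insert_iff.mpr ⟨hBe, by omega⟩
  have hsum : u + ∑ v ∈ B, v = 0 := by
    rw [← heq, Finset.sum_insert hu] at hesum; exact hesum
  have : u = -(∑ v ∈ B, v) := eq_neg_of_add_eq_zero_left hsum
  rw [← heq, this]

lemma main_aux (r : ℕ) (hr : 2 ≤ r) (hn : r ≤ n) [NeZero n] :
    ∃ H : Finset (Finset (Fin n)), CoversShadows n r H ∧
      r * H.card ≤ n.choose (r - 1) + 2 * r * n.choose (r - 2) := by
  classical
  set H0 : Finset (Finset (Fin n)) :=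
    univ.filter (fun e => e.card = r ∧ ∑ v ∈ e, v = 0) with hH0
  set bad : Finset (Finset (Fin n)) :=
    univ.filter (fun B => B.card = r - 1 ∧ -(∑ v ∈ B, v) ∈ B) with hbadset
  set fixEdge : Finset (Fin n) → Finset (Fin n) :=
    fun B => if h : Bᶜ.Nonempty then insert (Bᶜ.min' h) B else B with hfix
  -- double counting for H0
  have hcount : H0.card * r ≤ n.choose (r - 1) := by
    have hdisj : ∀ e₁ ∈ H0, ∀ e₂ ∈ H0, e₁ ≠ e₂ →
        Disjoint (e₁.powersetCard (r - 1)) (e₂.powersetCard (r - 1)) := by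
      intro e₁ h1 e₂ h2 hne
      rw [Finset.disjoint_left]
      intro B hB1 hB2
      rw [mem_powersetCard] at hB1 hB2
      obtain ⟨hc1, hs1⟩ := (mem_filter.mp h1).2
      obtain ⟨hc2, hs2⟩ := (mem_filter.mp h2).2
      exact hne ((eq_insert_neg_sum hc1 hs1 hB1.1 hB1.2 (by omega)).trans
        (eq_insert_neg_sum hc2 hs2 hB2.1 hB2.2 (by omega)).symm)
    have h1 : (H0.biUnion fun e => e.powersetCard (r - 1)).card = H0.card * r := by
      rw [Finset.card_biUnion hdisj]
      rw [Finset.sum_congr rfl (fun e he => ?_), Finset.sum_const, smul_eq_mul]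
      rw [Finset.card_powersetCard, (mem_filter.mp he).2.1]
      have h2 : r - (r - 1) = 1 := by omega
      rw [← Nat.choose_symm (by omega : r - 1 ≤ r), h2, Nat.choose_one_right]
    have h2 : (H0.biUnion fun e => e.powersetCard (r - 1)) ⊆
        (univ : Finset (Fin n)).powersetCard (r - 1) := by
      intro B hB
      rw [Finset.mem_biUnion] at hB
      obtain ⟨e, _, hBe⟩ := hB
      rw [mem_powersetCard] at hBe ⊢
      exact ⟨subset_univ _, hBe.2⟩
    calc H0.card * r = _ := h1.symm
      _ ≤ ((univ : Finset (Fin n)).powersetCard (r - 1)).card := Finset.card_le_card h2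
      _ = n.choose (r - 1) := by rw [Finset.card_powersetCard, card_univ, Fintype.card_fin]
  -- counting bad sets
  have hbad : bad.card ≤ 2 * n.choose (r - 2) := by
    have := Finset.card_le_card_of_injOn
      (f := fun B : Finset (Fin n) =>
        (B.erase (-(∑ v ∈ B, v)), decide (2 * ((-(∑ v ∈ B, v) : Fin n)).val < n)))
      (s := bad)
      (t := ((univ : Finset (Fin n)).powersetCard (r - 2)) ×ˢ (univ : Finset Bool))
      ?_ ?_
    · calc bad.card ≤ _ := this
        _ = n.choose (r - 2) * 2 := by
            rw [Finset.card_product, Finset.card_powersetCard, card_univ, Fintype.card_fin,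
              card_univ, Fintype.card_bool]
        _ = 2 * n.choose (r - 2) := by ring
    · intro B hB
      obtain ⟨hBc, hmem⟩ := (mem_filter.mp hB).2
      rw [Finset.mem_coe, Finset.mem_product, mem_powersetCard]
      refine ⟨⟨subset_univ _, ?_⟩, mem_univ _⟩
      rw [Finset.card_erase_of_mem hmem, hBc]
      omega
    · intro B₁ hB₁ B₂ hB₂ heq
      simp only [Finset.mem_coe] at hB₁ hB₂
      obtain ⟨hc1, hm1⟩ := (mem_filter.mp hB₁).2
      obtain ⟨hc2, hm2⟩ := (mem_filter.mp hB₂).2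
      set u₁ : Fin n := -(∑ v ∈ B₁, v) with hu₁
      set u₂ : Fin n := -(∑ v ∈ B₂, v) with hu₂
      simp only [Prod.mk.injEq] at heq
      obtain ⟨hE, hD⟩ := heq
      have hins1 : B₁ = insert u₁ (B₁.erase u₁) := (Finset.insert_erase hm1).symm
      have hins2 : B₂ = insert u₂ (B₂.erase u₂) := (Finset.insert_erase hm2).symm
      have hs1 : ∑ v ∈ B₁, v = u₁ + ∑ v ∈ B₁.erase u₁, v := by
        conv_lhs => rw [hins1]
        rw [Finset.sum_insert (Finset.notMem_erase _ _)]
      have hs2 : ∑ v ∈ B₂, v = u₂ + ∑ v ∈ B₂.erase u₂, v := by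
        conv_lhs => rw [hins2]
        rw [Finset.sum_insert (Finset.notMem_erase _ _)]
      have e1 : u₁ + u₁ = -(∑ v ∈ B₁.erase u₁, v) := by
        have h := hu₁
        rw [hs1] at h
        rw [neg_add] at h; exact eq_neg_add_iff_add_eq.mp h
      have e2 : u₂ + u₂ = -(∑ v ∈ B₂.erase u₂, v) := by
        have h := hu₂
        rw [hs2] at h
        rw [neg_add] at h; exact eq_neg_add_iff_add_eq.mp h
      have hsame : u₁ + u₁ = u₂ + u₂ := by rw [e1, e2, hE]
      have hval : (u₁.val + u₁.val) % n = (u₂.val + u₂.val) % n := by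
        have := congrArg Fin.val hsame
        rwa [Fin.val_add, Fin.val_add] at this
      have hDD : (2 * u₁.val < n) ↔ (2 * u₂.val < n) := by
        rwa [decide_eq_decide] at hD
      have hlt1 : u₁.val < n := u₁.is_lt
      have hlt2 : u₂.val < n := u₂.is_lt
      have huu : u₁ = u₂ := by
        apply Fin.eq_of_val_eq
        rcases lt_or_ge (2 * u₁.val) n with h | h
        · have h' : 2 * u₂.val < n := hDD.mp h
          rw [Nat.mod_eq_of_lt (by omega), Nat.mod_eq_of_lt (by omega)] at hval
          omega
        · have h' : n ≤ 2 * u₂.val := by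
            by_contra hcon
            exact absurd (hDD.mpr (by omega)) (by omega)
          have m1 : (u₁.val + u₁.val) % n = u₁.val + u₁.val - n := by
            rw [Nat.mod_eq_sub_mod (by omega), Nat.mod_eq_of_lt (by omega)]
          have m2 : (u₂.val + u₂.val) % n = u₂.val + u₂.val - n := by
            rw [Nat.mod_eq_sub_mod (by omega), Nat.mod_eq_of_lt (by omega)]
          rw [m1, m2] at hval
          omega
      rw [hins1, hins2, hE, huu]
  -- the hypergraph
  refine ⟨H0 ∪ bad.image fixEdge, ⟨?_, ?_⟩, ?_⟩
  · -- uniform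
    intro e he
    rcases Finset.mem_union.mp he with h | h
    · exact (mem_filter.mp h).2.1
    · obtain ⟨B, hB, hBe⟩ := Finset.mem_image.mp h
      obtain ⟨hBc, _⟩ := (mem_filter.mp hB).2
      have hne : Bᶜ.Nonempty := by
        rw [← Finset.card_pos, Finset.card_compl, Fintype.card_fin, hBc]
        omega
      have hmin : Bᶜ.min' hne ∉ B := by
        have := Finset.min'_mem Bᶜ hne
        rwa [Finset.mem_compl] at this
      rw [← hBe, hfix]
      simp only [dif_pos hne]
      rw [Finset.card_insert_of_notMem hmin, hBc]
      omega
  · -- covers all (r-1)-sets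
    intro B hB
    by_cases hmem : -(∑ v ∈ B, v) ∈ B
    · have hBbad : B ∈ bad := by
        rw [hbadset, mem_filter]
        exact ⟨mem_univ _, hB, hmem⟩
      refine ⟨fixEdge B, Finset.mem_union_right _ (Finset.mem_image_of_mem _ hBbad), ?_⟩
      rw [hfix]
      by_cases hne : Bᶜ.Nonempty
      · simp only [dif_pos hne]; exact Finset.subset_insert _ _
      · simp only [dif_neg hne]
        exact Finset.Subset.refl _
    · refine ⟨insert (-(∑ v ∈ B, v)) B, Finset.mem_union_left _ ?_, Finset.subset_insert _ _⟩
      rw [hH0, mem_filter]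
      refine ⟨mem_univ _, ?_, ?_⟩
      · rw [Finset.card_insert_of_notMem hmem, hB]; omega
      · rw [Finset.sum_insert hmem, neg_add_cancel]
  · -- cardinality
    have h1 : (H0 ∪ bad.image fixEdge).card ≤ H0.card + bad.card :=
      le_trans (Finset.card_union_le _ _) (by
        exact Nat.add_le_add_left (Finset.card_image_le) _)
    calc r * (H0 ∪ bad.image fixEdge).card ≤ r * (H0.card + bad.card) :=
          Nat.mul_le_mul_left _ h1
      _ = H0.card * r + r * bad.card := by ring
      _ ≤ n.choose (r - 1) + r * (2 * n.choose (r - 2)) :=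
          Nat.add_le_add hcount (Nat.mul_le_mul_left _ hbad)
      _ = n.choose (r - 1) + 2 * r * n.choose (r - 2) := by ring

end DUpperAux

-- nothing

/-- For fixed `r ≥ 2` and every `ε > 0`, for all sufficiently large `n` we have
`D(n,r) ≤ (1+ε)·C(n,r-1)/r`; with the trivial lower bound, this gives
`D(n,r) = (1+o(1))·C(n,r-1)/r`. -/
theorem D_upper_bound (r : ℕ) (hr : 2 ≤ r) (ε : ℝ) (hε : 0 < ε) :
    ∃ n₀ : ℕ, ∀ n : ℕ, n₀ ≤ n →
      (D n r : ℝ) ≤ (1 + ε) * (n.choose (r - 1) : ℝ) / (r : ℝ) := by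
  refine ⟨max (r + 2) (r + ⌈(2 * (r : ℝ) * r) / ε⌉₊), fun n hn => ?_⟩
  have hn1 : r + 2 ≤ n := le_trans (le_max_left _ _) hn
  have hn2 : r + ⌈(2 * (r : ℝ) * r) / ε⌉₊ ≤ n := le_trans (le_max_right _ _) hn
  haveI : NeZero n := ⟨by omega⟩
  obtain ⟨H, hcov, hcard⟩ := DUpperAux.main_aux (n := n) r hr (by omega)
  have hD : D n r ≤ H.card := Nat.sInf_le ⟨H, hcov, rfl⟩
  have hDr : r * D n r ≤ n.choose (r - 1) + 2 * r * n.choose (r - 2) :=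
    le_trans (Nat.mul_le_mul_left _ hD) hcard
  -- cast to ℝ
  set C1 : ℝ := (n.choose (r - 1) : ℝ) with hC1
  set C2 : ℝ := (n.choose (r - 2) : ℝ) with hC2
  have hC1pos : 0 < C1 := by
    rw [hC1]
    exact_mod_cast Nat.choose_pos (by omega : r - 1 ≤ n)
  have hC2nonneg : 0 ≤ C2 := by positivity
  have hrpos : (0 : ℝ) < r := by positivity
  have hDrR : (r : ℝ) * (D n r : ℝ) ≤ C1 + 2 * r * C2 := by
    rw [hC1, hC2]
    exact_mod_cast hDr
  -- the choose identity
  have hid : n.choose (r - 1) * (r - 1) = n.choose (r - 2) * (n - (r - 2)) := by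
    have h := Nat.choose_succ_right_eq n (r - 2)
    rwa [show r - 2 + 1 = r - 1 from by omega] at h
  have hidR : C1 * ((r : ℝ) - 1) = C2 * ((n : ℝ) - (r : ℝ) + 2) := by
    have h : ((n.choose (r - 1) * (r - 1) : ℕ) : ℝ)
        = ((n.choose (r - 2) * (n - (r - 2)) : ℕ) : ℝ) := by exact congrArg (fun m : ℕ => (m : ℝ)) hid
    rw [Nat.cast_mul, Nat.cast_mul, Nat.cast_sub (by omega : r - 2 ≤ n),
      Nat.cast_sub (by omega : 1 ≤ r), Nat.cast_sub (by omega : 2 ≤ r)] at h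
    rw [hC1, hC2]
    push_cast at h ⊢
    linarith
  -- choice of n₀
  have hεn : 2 * (r : ℝ) * r ≤ ε * ((n : ℝ) - r) := by
    have h1 : (2 * (r : ℝ) * r) / ε ≤ (⌈(2 * (r : ℝ) * r) / ε⌉₊ : ℝ) := Nat.le_ceil _
    have h2 : (⌈(2 * (r : ℝ) * r) / ε⌉₊ : ℝ) ≤ (n : ℝ) - r := by
      have : ((r + ⌈(2 * (r : ℝ) * r) / ε⌉₊ : ℕ) : ℝ) ≤ (n : ℝ) := by exact_mod_cast hn2
      push_cast at this
      linarith
    have h3 : (2 * (r : ℝ) * r) / ε ≤ (n : ℝ) - r := le_trans h1 h2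
    calc 2 * (r : ℝ) * r = ((2 * (r : ℝ) * r) / ε) * ε := by field_simp
      _ ≤ ((n : ℝ) - r) * ε := mul_le_mul_of_nonneg_right h3 (le_of_lt hε)
      _ = ε * ((n : ℝ) - r) := by ring
  -- key: 2 r C2 ≤ ε C1
  have hkey : 2 * (r : ℝ) * C2 ≤ ε * C1 := by
    have hnr : (0 : ℝ) < (n : ℝ) - (r : ℝ) + 2 := by
      have : (r : ℝ) ≤ (n : ℝ) := by exact_mod_cast le_trans (by omega : r ≤ r + 2) hn1
      linarith
    rw [← mul_le_mul_iff_of_pos_right hnr]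
    have lhs_eq : 2 * (r : ℝ) * C2 * ((n : ℝ) - r + 2) = 2 * r * (C1 * ((r : ℝ) - 1)) := by
      rw [hidR]; ring
    rw [lhs_eq]
    have h5 : 2 * (r : ℝ) * (C1 * ((r : ℝ) - 1)) ≤ 2 * r * r * C1 := by
      nlinarith [hC1pos, hrpos]
    have h6 : 2 * (r : ℝ) * r * C1 ≤ ε * ((n : ℝ) - r) * C1 :=
      mul_le_mul_of_nonneg_right hεn (le_of_lt hC1pos)
    have h7 : ε * ((n : ℝ) - r) * C1 ≤ ε * C1 * ((n : ℝ) - r + 2) := by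
      nlinarith [hC1pos, hε]
    linarith
  -- finish
  rw [div_eq_mul_inv, ← ge_iff_le]
  rw [ge_iff_le, ← sub_nonneg]
  have final : (r : ℝ) * (D n r : ℝ) ≤ (1 + ε) * C1 := by linarith
  have : (D n r : ℝ) ≤ (1 + ε) * C1 / r := by
    rw [le_div_iff₀ hrpos]
    linarith [final]
  rw [sub_nonneg]
  calc (D n r : ℝ) ≤ (1 + ε) * C1 / r := this
    _ = (1 + ε) * C1 * (r : ℝ)⁻¹ := by rw [div_eq_mul_inv]
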